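/- arXiv:0710.3003 — 2 statements merged into one kernel-verified Lean document; each statement's English description precedes it below -/
import Mathlib

section
/- Let f : ℤ → ℤ be ℤ-convex on the integer interval [l,u], with m = ⌊(l+u)/2⌋ and l ≤ m-1, m+1 ≤ u. If f(m-1) < f(m), then min{f(α) : l ≤ α ≤ u, α ∈ ℤ} = min{f(α) : l ≤ α ≤ m, α ∈ ℤ}. -/
/-- A function `f : ℤ → ℤ` is ℤ-convex if for all `x, y ∈ ℤ` and `0 ≤ λ ≤ 1` with
`λx + (1-λ)y ∈ ℤ`, we have `f(λx+(1-λ)y) ≤ λ f(x) + (1-λ) f(y)`. -/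
def ZConvex (f : ℤ → ℤ) : Prop :=
  ∀ (x y z : ℤ) (lam : ℚ), 0 ≤ lam → lam ≤ 1 →
    (z : ℚ) = lam * x + (1 - lam) * y →
    (f z : ℚ) ≤ lam * f x + (1 - lam) * f y

/-- If `f` is ℤ-convex, `m = ⌊(l+u)/2⌋`, `l ≤ m-1`, `m+1 ≤ u`, and `f(m-1) < f(m)`, then
`min {f(α) : l ≤ α ≤ u} = min {f(α) : l ≤ α ≤ m}`. -/
theorem bisection_left_case (f : ℤ → ℤ) (hf : ZConvex f) (l u m : ℤ)
    (hm : m = (l + u) / 2) (h1 : l ≤ m - 1) (h2 : m + 1 ≤ u)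
    (hlt : f (m - 1) < f m) :
    sInf (f '' Set.Icc l u) = sInf (f '' Set.Icc l m) := by
  have key : ∀ α : ℤ, m ≤ α → f m ≤ f α := by
    intro α hα
    rcases eq_or_lt_of_le hα with h | h
    · exact le_of_eq (congrArg f h)
    · set n : ℤ := α - m with hn
      have hn1 : 1 ≤ n := by omega
      have hpos : (0:ℚ) < (n:ℚ) + 1 := by
        have : (1:ℚ) ≤ (n:ℚ) := by exact_mod_cast hn1
        linarith
      set lam : ℚ := (n:ℚ) / ((n:ℚ) + 1) with hlam
      have hnn : (0:ℚ) ≤ (n:ℚ) := by exact_mod_cast (by omega : (0:ℤ) ≤ n)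
      have h0 : 0 ≤ lam := div_nonneg hnn hpos.le
      have h1' : lam < 1 := by
        rw [hlam, div_lt_one hpos]; linarith
      have heq : (m:ℚ) = lam * ((m:ℤ) - 1 : ℤ) + (1 - lam) * (α:ℚ) := by
        have hα' : (α:ℚ) = (m:ℚ) + n := by push_cast [hn]; ring
        rw [hα', hlam]
        push_cast
        field_simp
        ring
      have hconv := hf (m - 1) α m lam h0 h1'.le heq
      have hle : (f (m-1) : ℚ) ≤ (f m : ℚ) := by exact_mod_cast hlt.le
      have h2' : (f m : ℚ) ≤ lam * f m + (1 - lam) * f α := by nlinarith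
      have h3 : (1 - lam) * (f m : ℚ) ≤ (1 - lam) * f α := by linarith
      have h4 : (f m : ℚ) ≤ f α := le_of_mul_le_mul_left h3 (by linarith)
      exact_mod_cast h4
  have hbdd : BddBelow (f '' Set.Icc l u) := ((Set.finite_Icc l u).image f).bddBelow
  have hne : (f '' Set.Icc l m).Nonempty :=
    ⟨f m, ⟨m, ⟨by omega, le_refl m⟩, rfl⟩⟩
  apply le_antisymm
  · exact csInf_le_csInf hbdd hne
      (Set.image_mono (f := f) (Set.Icc_subset_Icc_right (by omega)))
  · refine le_csInf ⟨f m, ⟨m, ⟨by omega, by omega⟩, rfl⟩⟩ ?_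
    rintro b ⟨α, ⟨hlα, hαu⟩, rfl⟩
    rcases le_or_gt α m with h | h
    · exact csInf_le ((Set.finite_Icc l m).image f).bddBelow ⟨α, ⟨hlα, h⟩, rfl⟩
    · calc sInf (f '' Set.Icc l m) ≤ f m :=
            csInf_le ((Set.finite_Icc l m).image f).bddBelow ⟨m, ⟨by omega, le_refl m⟩, rfl⟩
        _ ≤ f α := key α h.le
end

section
/- Let g : ℤ → ℤ be ℤ-convex, and let x ∈ ℤ and d₁, …, d_t ∈ ℤ all have the same sign (all ≥ 0 or all ≤ 0), with y = x + Σ d_i. Then g(y) - g(x) ≥ Σ_{i=1}^t [g(x + d_i) - g(x)]. (Superadditivity of convex increments in a common direction.) -/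
lemma zconvex_shift (g : ℤ → ℤ) (hg : ZConvex g) (u v e : ℤ)
    (huv : u ≤ v) (he : 0 ≤ e) :
    g (u + e) - g u ≤ g (v + e) - g v := by
  rcases eq_or_lt_of_le he with rfl | he'
  · simp
  rcases eq_or_lt_of_le huv with rfl | huv'
  · simp
  have huvQ : (u : ℚ) < v := by exact_mod_cast huv'
  have heQ : (0 : ℚ) < e := by exact_mod_cast he'
  set N : ℚ := (v : ℚ) + e - u with hN
  have hN0 : 0 < N := by simp only [hN]; linarith
  have hNne : N ≠ 0 := hN0.ne'
  have h1 := hg u (v + e) (u + e) (((v : ℚ) - u) / N)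
    (div_nonneg (by linarith) hN0.le) (by rw [div_le_one hN0]; linarith)
    (by push_cast; field_simp; ring)
  have h2 := hg u (v + e) v ((e : ℚ) / N)
    (div_nonneg (by linarith) hN0.le) (by rw [div_le_one hN0]; linarith)
    (by push_cast; field_simp; ring)
  have h1' := mul_le_mul_of_nonneg_left h1 hN0.le
  have h2' := mul_le_mul_of_nonneg_left h2 hN0.le
  have key : N * ((g (u + e) : ℚ) + g v) ≤ N * ((g u : ℚ) + g (v + e)) := by
    calc N * ((g (u + e) : ℚ) + g v) = N * (g (u + e) : ℚ) + N * (g v : ℚ) := by ring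
      _ ≤ N * (((v : ℚ) - u) / N * (g u) + (1 - ((v : ℚ) - u) / N) * (g (v + e)))
          + N * ((e : ℚ) / N * (g u) + (1 - (e : ℚ) / N) * (g (v + e))) := add_le_add h1' h2'
      _ = N * ((g u : ℚ) + g (v + e)) := by field_simp; ring
  have key2 := (mul_le_mul_iff_right₀ hN0).mp key
  have : (g (u + e) : ℚ) - g u ≤ g (v + e) - g v := by linarith
  exact_mod_cast this

lemma zconvex_shift_neg (g : ℤ → ℤ) (hg : ZConvex g) (u v e : ℤ)
    (huv : u ≤ v) (he : e ≤ 0) :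
    g (v + e) - g v ≤ g (u + e) - g u := by
  have := zconvex_shift g hg (u + e) (v + e) (-e) (by linarith) (by linarith)
  simp only [add_neg_cancel_right] at this
  linarith

lemma aux_shift (g : ℤ → ℤ) (hg : ZConvex g) (x d0 s : ℤ)
    (h : (0 ≤ d0 ∧ 0 ≤ s) ∨ (d0 ≤ 0 ∧ s ≤ 0)) :
    g (x + s) - g x ≤ g (x + d0 + s) - g (x + d0) := by
  rcases h with ⟨h1, h2⟩ | ⟨h1, h2⟩
  · exact zconvex_shift g hg x (x + d0) s (by linarith) h2
  · exact zconvex_shift_neg g hg (x + d0) x s (by linarith) h2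

lemma aux_main (g : ℤ → ℤ) (hg : ZConvex g) :
    ∀ (t : ℕ) (x : ℤ) (d : Fin t → ℤ),
      ((∀ i, 0 ≤ d i) ∨ (∀ i, d i ≤ 0)) →
      ∑ i, (g (x + d i) - g x) ≤ g (x + ∑ i, d i) - g x := by
  intro t
  induction t with
  | zero => intro x d _; simp
  | succ n ih =>
    intro x d hsign
    have hsign' : (∀ i : Fin n, 0 ≤ d i.succ) ∨ (∀ i : Fin n, d i.succ ≤ 0) := by
      rcases hsign with h | h
      · exact Or.inl fun i => h i.succ
      · exact Or.inr fun i => h i.succ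
    have IH := ih x (fun i => d i.succ) hsign'
    set S : ℤ := ∑ i : Fin n, d i.succ with hS
    have hSsign : (0 ≤ d 0 ∧ 0 ≤ S) ∨ (d 0 ≤ 0 ∧ S ≤ 0) := by
      rcases hsign with h | h
      · exact Or.inl ⟨h 0, Finset.sum_nonneg fun i _ => h i.succ⟩
      · exact Or.inr ⟨h 0, Finset.sum_nonpos fun i _ => h i.succ⟩
    have hstep := aux_shift g hg x (d 0) S hSsign
    rw [Fin.sum_univ_succ (f := fun i => g (x + d i) - g x), Fin.sum_univ_succ (f := d)]
    have : x + (d 0 + S) = x + d 0 + S := by ring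
    rw [this]
    linarith

/-- Superadditivity of convex increments in a common direction: if `g` is ℤ-convex and
`d₁, …, d_t` all have the same sign, with `y = x + Σ dᵢ`, then
`g(y) - g(x) ≥ Σᵢ [g(x + dᵢ) - g(x)]`. -/
theorem Zconvex_superadditive_increments (g : ℤ → ℤ) (hg : ZConvex g)
    (x : ℤ) (t : ℕ) (d : Fin t → ℤ)
    (hsign : (∀ i, 0 ≤ d i) ∨ (∀ i, d i ≤ 0))
    (y : ℤ) (hy : y = x + ∑ i, d i) :
    ∑ i, (g (x + d i) - g x) ≤ g y - g x := by
  rw [hy]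
  exact aux_main g hg t x d hsign
end
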